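/- Let X be a Busemann nonpositively curved uniquely geodesic space, γ a unit-speed geodesic, and x a boundary point at infinity with the property that from every point there is a unique geodesic ray asymptotic to the class of x. For t ≥ 0 let w(t) denote the initial direction at γ(t) of the ray from γ(t) to x. Then the angle ∠_{γ(0)}(γ'(0), w(0)) ≤ ∠_{γ(t)}(γ'(t), w(t)) for every t > 0 (monotonicity of the angle to a point at infinity along a geodesic). -/

import Mathlib

/-- A constant-speed globally minimizing geodesic line. -/
def IsGeodesicLine {X : Type*} [MetricSpace X] (speed : ℝ) (γ : ℝ → X) : Prop :=
  ∀ s t : ℝ, dist (γ s) (γ t) = speed * |s - t|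

/-- Busemann nonpositive curvature: distance between geodesics is convex. -/
def BusemannConvex (X : Type*) [MetricSpace X] : Prop :=
  ∀ (α β : ℝ → X) (a b : ℝ), IsGeodesicLine a α → IsGeodesicLine b β →
    ConvexOn ℝ Set.univ (fun t => dist (α t) (β t))

/-- Uniquely geodesic metric space. -/
def UniquelyGeodesic (X : Type*) [MetricSpace X] : Prop :=
  ∀ x y : X, ∃! γ : ℝ → X, γ 0 = x ∧ γ 1 = y ∧ IsGeodesicLine (dist x y) γ

/-- A unit-speed geodesic ray, parameterized on [0,∞). -/
def IsGeodesicRay {X : Type*} [MetricSpace X] (γ : ℝ → X) : Prop :=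
  ∀ s t : ℝ, 0 ≤ s → 0 ≤ t → dist (γ s) (γ t) = |s - t|

/-- Two rays are asymptotic if they stay at bounded distance for t ≥ 0. -/
def AsymptoticRays {X : Type*} [MetricSpace X] (γ δ : ℝ → X) : Prop :=
  ∃ c : ℝ, ∀ t : ℝ, 0 ≤ t → dist (γ t) (δ t) ≤ c

private lemma convex_slope_aux {f : ℝ → ℝ} (hf : ConvexOn ℝ Set.univ f)
    {a s : ℝ} (ha : 0 ≤ a) (has : a ≤ s) (hs : 0 < s) :
    f a ≤ (1 - a/s) * f 0 + (a/s) * f s := by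
  have h2 : (0:ℝ) ≤ a/s := div_nonneg ha hs.le
  have h1 : (0:ℝ) ≤ 1 - a/s := by
    have : a/s ≤ 1 := (div_le_one hs).2 has
    linarith
  have h := hf.2 (Set.mem_univ (0:ℝ)) (Set.mem_univ s) h1 h2 (by ring)
  simp only [smul_eq_mul] at h
  rw [show (1 - a/s) * 0 + (a/s) * s = a by field_simp; ring] at h
  exact h

private lemma ray_extends {X : Type*} [MetricSpace X]
    (huniq : UniquelyGeodesic X) {w : ℝ → X} (hw : IsGeodesicRay w)
    {s : ℝ} (hs : 0 < s) :
    ∃ L : ℝ → X, IsGeodesicLine 1 L ∧ ∀ u : ℝ, 0 ≤ u → u ≤ s → L u = w u := by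
  obtain ⟨σ, ⟨h0, h1, hline⟩, huni⟩ := huniq (w 0) (w s)
  have hds : dist (w 0) (w s) = s := by
    rw [hw 0 s le_rfl hs.le, abs_of_nonpos (by linarith)]; ring
  rw [hds] at hline huni
  set c : ℝ → X := fun u => if 0 ≤ u ∧ u ≤ 1 then w (s*u) else σ u with hc
  have hkey : ∀ u v : ℝ, u ≤ v → dist (c u) (c v) = s * (v - u) := by
    intro u v huv
    simp only [hc]
    split_ifs with hu hv hv
    · rw [hw (s*u) (s*v) (by nlinarith [hu.1]) (by nlinarith [hv.1]),
        abs_of_nonpos (by nlinarith)]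
      ring
    · have hv1 : 1 < v := by
        rcases not_and_or.1 hv with h | h
        · exact absurd (le_trans hu.1 huv) h
        · exact lt_of_not_ge h
      apply le_antisymm
      · calc dist (w (s*u)) (σ v)
            ≤ dist (w (s*u)) (w s) + dist (w s) (σ v) := dist_triangle _ _ _
          _ = s*(v-u) := by
            rw [hw (s*u) s (by nlinarith [hu.1]) hs.le, ← h1, hline 1 v,
              abs_of_nonpos (by nlinarith [hu.2]), abs_of_nonpos (by linarith)]
            ring
      · have hlv := hline 0 v
        rw [abs_of_nonpos (by linarith : (0:ℝ) - v ≤ 0)] at hlv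
        have htri : dist (σ 0) (σ v) ≤ dist (σ 0) (w (s*u)) + dist (w (s*u)) (σ v) :=
          dist_triangle _ _ _
        rw [hlv, h0, hw 0 (s*u) le_rfl (by nlinarith [hu.1]),
          abs_of_nonpos (by nlinarith [hu.1] : 0 - s*u ≤ 0)] at htri
        nlinarith
    · have hu0 : u < 0 := by
        rcases not_and_or.1 hu with h | h
        · exact lt_of_not_ge h
        · exact absurd (le_trans huv hv.2) h
      apply le_antisymm
      · calc dist (σ u) (w (s*v))
            ≤ dist (σ u) (σ 0) + dist (σ 0) (w (s*v)) := dist_triangle _ _ _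
          _ = s*(v-u) := by
            rw [hline u 0, h0, hw 0 (s*v) le_rfl (by nlinarith [hv.1]),
              abs_of_nonpos (by linarith : u - 0 ≤ 0), abs_of_nonpos (by nlinarith [hv.1])]
            ring
      · have h1v : dist (σ u) (σ 1) = s * (1 - u) := by
          rw [hline u 1, abs_of_nonpos (by linarith : u - 1 ≤ 0)]; ring
        have htri : dist (σ u) (σ 1) ≤ dist (σ u) (w (s*v)) + dist (w (s*v)) (σ 1) :=
          dist_triangle _ _ _
        rw [h1v, h1, hw (s*v) s (by nlinarith [hv.1]) hs.le,
          abs_of_nonpos (by nlinarith [hv.2])] at htri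
        nlinarith
    · rw [hline u v, abs_of_nonpos (by linarith)]; ring
  have hcline : IsGeodesicLine s c := by
    intro u v
    rcases le_total u v with h | h
    · rw [hkey u v h, abs_of_nonpos (by linarith)]; ring
    · rw [dist_comm, hkey v u h, abs_of_nonneg (by linarith)]
  have hc0 : c 0 = w 0 := by norm_num [hc]
  have hc1 : c 1 = w s := by norm_num [hc]
  have hcσ : c = σ := huni c ⟨hc0, hc1, hcline⟩
  refine ⟨fun u => σ (u/s), ?_, ?_⟩
  · intro a b
    rw [hline (a/s) (b/s), show a/s - b/s = (a-b)/s by ring, abs_div,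
      abs_of_pos hs, mul_div_cancel₀ _ hs.ne', one_mul]
  · intro u hu hus
    have hmem : 0 ≤ u/s ∧ u/s ≤ 1 := ⟨div_nonneg hu hs.le, (div_le_one hs).2 hus⟩
    show σ (u/s) = w u
    rw [← hcσ]
    simp only [hc, if_pos hmem]
    rw [mul_div_cancel₀ _ hs.ne']

/-- Monotonicity of the angle to a point at infinity along a
geodesic: if `w t` is the unique unit-speed ray from γ(t) asymptotic to a fixed
ideal point (represented by the mutually asymptotic family `w`), then the angle
at γ(0) between γ and w 0 is at most the angle at γ(t) between γ and w t. -/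
theorem angle_to_infinity_monotone
    {X : Type*} [MetricSpace X]
    (huniq : UniquelyGeodesic X) (hconv : BusemannConvex X)
    (γ : ℝ → X) (hγ : IsGeodesicLine 1 γ)
    (w : ℝ → ℝ → X)
    (hw_ray : ∀ t : ℝ, 0 ≤ t → IsGeodesicRay (w t))
    (hw_foot : ∀ t : ℝ, 0 ≤ t → w t 0 = γ t)
    (hw_asymp : ∀ s t : ℝ, 0 ≤ s → 0 ≤ t → AsymptoticRays (w s) (w t))
    (t : ℝ) (ht : 0 < t)
    (A₀ Aₜ : ℝ)
    (hA₀ : Filter.Tendsto (fun r => dist (γ r) (w 0 r) / r)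
        (nhdsWithin 0 (Set.Ioi 0)) (nhds A₀))
    (hAₜ : Filter.Tendsto (fun r => dist (γ (t + r)) (w t r) / r)
        (nhdsWithin 0 (Set.Ioi 0)) (nhds Aₜ)) :
    A₀ ≤ Aₜ := by
  have hw0ray := hw_ray 0 le_rfl
  have hwtray := hw_ray t ht.le
  set d0 : ℝ → ℝ := fun u => dist (γ u) (w 0 u) with hd0
  -- Step A: convexity comparison for d0
  have stepA : ∀ s : ℝ, 0 < s → ∀ a : ℝ, 0 ≤ a → a ≤ s → d0 a ≤ (a/s) * d0 s := by
    intro s hs a ha has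
    obtain ⟨L, hL, hLeq⟩ := ray_extends huniq hw0ray hs
    have hf : ConvexOn ℝ Set.univ (fun u => dist (γ u) (L u)) := hconv γ L 1 1 hγ hL
    have h0 : dist (γ 0) (L 0) = 0 := by
      rw [hLeq 0 le_rfl hs.le, hw_foot 0 le_rfl, dist_self]
    have hcs := convex_slope_aux hf ha has hs
    simp only [h0] at hcs
    calc d0 a = dist (γ a) (L a) := by rw [hd0]; simp only; rw [hLeq a ha has]
      _ ≤ (1 - a/s)*0 + (a/s) * dist (γ s) (L s) := hcs
      _ = (a/s) * d0 s := by rw [hd0]; simp only; rw [hLeq s hs.le le_rfl]; ring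
  -- Step B: A₀ is a lower bound for the slopes
  have stepB : ∀ ρ : ℝ, 0 < ρ → A₀ ≤ d0 ρ / ρ := by
    intro ρ hρ
    refine le_of_tendsto hA₀ ?_
    filter_upwards [self_mem_nhdsWithin,
      eventually_nhdsWithin_of_eventually_nhds (eventually_lt_nhds hρ)] with r hr hrρ
    have hr0 : 0 < r := hr
    have h := stepA ρ hρ r hr0.le hrρ.le
    rw [div_le_div_iff₀ hr0 hρ]
    have h2 : r / ρ * d0 ρ * ρ = r * d0 ρ := by field_simp
    have h3 := mul_le_mul_of_nonneg_right h hρ.le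
    rw [h2] at h3
    nlinarith
  -- Step C: the asymptotic comparison g r ≤ g 0
  obtain ⟨cb, hcb⟩ := hw_asymp t 0 ht.le le_rfl
  have stepC : ∀ r : ℝ, 0 ≤ r → dist (w t r) (w 0 (t+r)) ≤ dist (γ t) (w 0 t) := by
    intro r hr
    have hg0 : dist (w t 0) (w 0 t) = dist (γ t) (w 0 t) := by rw [hw_foot t ht.le]
    set M : ℝ := cb + t with hM
    have hbound : ∀ z : ℝ, 0 ≤ z → dist (w t z) (w 0 (t+z)) ≤ M := by
      intro z hz
      have h1 := hcb z hz
      have h2 : dist (w 0 z) (w 0 (t+z)) = t := by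
        rw [hw0ray z (t+z) hz (by linarith), abs_of_nonpos (by linarith)]; ring
      calc dist (w t z) (w 0 (t+z))
          ≤ dist (w t z) (w 0 z) + dist (w 0 z) (w 0 (t+z)) := dist_triangle _ _ _
        _ ≤ cb + t := by linarith
    have hineq : ∀ z : ℝ, r < z →
        dist (w t r) (w 0 (t+r)) ≤ (1 - r/z) * dist (γ t) (w 0 t) + (r/z) * M := by
      intro z hrz
      have hz : 0 < z := lt_of_le_of_lt hr hrz
      obtain ⟨L1, hL1, hL1eq⟩ := ray_extends huniq hwtray hz
      obtain ⟨L2, hL2, hL2eq⟩ := ray_extends huniq hw0ray (show (0:ℝ) < t + z by linarith)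
      have hβ : IsGeodesicLine 1 (fun u => L2 (t+u)) := by
        intro a b
        simp only
        rw [hL2 (t+a) (t+b), show t+a-(t+b) = a - b by ring]
      have hf : ConvexOn ℝ Set.univ (fun u => dist (L1 u) (L2 (t+u))) :=
        hconv L1 _ 1 1 hL1 hβ
      have heq : ∀ u : ℝ, 0 ≤ u → u ≤ z → dist (L1 u) (L2 (t+u)) = dist (w t u) (w 0 (t+u)) := by
        intro u h1 h2
        rw [hL1eq u h1 h2, hL2eq (t+u) (by linarith) (by linarith)]
      have hcs := convex_slope_aux hf hr hrz.le hz
      rw [heq 0 le_rfl hz.le, heq z hz.le le_rfl, heq r hr hrz.le, add_zero, hg0] at hcs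
      have hq : 0 ≤ r/z := div_nonneg hr hz.le
      have hbz := hbound z hz.le
      nlinarith
    have hq0 : Filter.Tendsto (fun z : ℝ => r/z) Filter.atTop (nhds 0) :=
      tendsto_const_nhds.div_atTop Filter.tendsto_id
    have hlim : Filter.Tendsto (fun z : ℝ => (1 - r/z) * dist (γ t) (w 0 t) + (r/z) * M)
        Filter.atTop (nhds (dist (γ t) (w 0 t))) := by
      have h : Filter.Tendsto (fun z : ℝ => (1 - r/z) * dist (γ t) (w 0 t) + (r/z) * M)
          Filter.atTop (nhds ((1 - 0) * dist (γ t) (w 0 t) + 0 * M)) :=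
        (((tendsto_const_nhds : Filter.Tendsto (fun _ : ℝ => (1:ℝ)) _ _).sub hq0).mul
          tendsto_const_nhds).add (hq0.mul tendsto_const_nhds)
      simpa using h
    exact ge_of_tendsto hlim
      (Filter.eventually_atTop.2 ⟨r+1, fun z hz => hineq z (by linarith)⟩)
  -- Conclusion
  refine ge_of_tendsto hAₜ ?_
  filter_upwards [self_mem_nhdsWithin] with r hr
  have hr0 : 0 < r := hr
  have htr : 0 < t + r := by linarith
  have h1 : d0 (t+r) ≤ dist (γ (t+r)) (w t r) + d0 t := by
    have hC := stepC r hr0.le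
    have : d0 (t+r) ≤ dist (γ (t+r)) (w t r) + dist (w t r) (w 0 (t+r)) := by
      rw [hd0]; exact dist_triangle _ _ _
    have hd0t : d0 t = dist (γ t) (w 0 t) := rfl
    linarith [hd0t ▸ hC]
  have h2 : d0 t ≤ (t/(t+r)) * d0 (t+r) := stepA (t+r) htr t ht.le (by linarith)
  have h3 : A₀ ≤ d0 (t+r) / (t+r) := stepB (t+r) htr
  rw [le_div_iff₀ hr0]
  rw [le_div_iff₀ htr] at h3
  rw [div_mul_eq_mul_div, le_div_iff₀ htr] at h2
  nlinarith [mul_le_mul_of_nonneg_left h3 hr0.le]
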